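/- Let R = C⁰_{b,D,<∞}(D) for D = [a,b] with a < b, and for x ∈ D let m_x = {f ∈ R : f(x) = 0}. Then the set T = {m_x : x ∈ D} is an open and dense subset of the maximal spectrum Specm(R) with the Zariski topology. -/

import Mathlib

open Set Filter Topology

/-- The ℝ-subalgebra of the product ring `W → ℝ` consisting of all bounded
functions with finitely many discontinuity points. -/
def pcAlg (W : Type*) [TopologicalSpace W] : Subalgebra ℝ (W → ℝ) where
  carrier := {f | (∃ C, ∀ x, |f x| ≤ C) ∧ {x | ¬ ContinuousAt f x}.Finite}
  add_mem' := by
    rintro f g ⟨⟨Cf, hCf⟩, hf⟩ ⟨⟨Cg, hCg⟩, hg⟩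
    refine ⟨⟨Cf + Cg, fun x => ?_⟩, (hf.union hg).subset fun x hx => ?_⟩
    · exact (abs_add_le _ _).trans (add_le_add (hCf x) (hCg x))
    · simp only [mem_union, mem_setOf_eq] at hx ⊢
      by_contra h
      push_neg at h
      exact hx (h.1.add h.2)
  mul_mem' := by
    rintro f g ⟨⟨Cf, hCf⟩, hf⟩ ⟨⟨Cg, hCg⟩, hg⟩
    refine ⟨⟨max Cf 0 * max Cg 0, fun x => ?_⟩, (hf.union hg).subset fun x hx => ?_⟩
    · rw [Pi.mul_apply, abs_mul]
      exact mul_le_mul ((hCf x).trans (le_max_left _ _)) ((hCg x).trans (le_max_left _ _))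
        (abs_nonneg _) (le_max_right _ _)
    · simp only [mem_union, mem_setOf_eq] at hx ⊢
      by_contra h
      push_neg at h
      exact hx (h.1.mul h.2)
  algebraMap_mem' := fun r => by
    refine ⟨⟨|r|, fun x => le_of_eq rfl⟩, Set.finite_empty.subset fun x hx => ?_⟩
    exact absurd continuousAt_const hx

/-- The ideal `m_x = {f : f x = 0}` of `R = C⁰_{b,D,<∞}(D)`. -/
def evalZeroIdeal (a b : ℝ) (x : ↥(Set.Icc a b)) : Ideal ↥(pcAlg ↥(Set.Icc a b)) where
  carrier := {f | f.1 x = 0}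
  zero_mem' := rfl
  add_mem' := by
    intro f g hf hg
    show f.1 x + g.1 x = 0
    rw [hf, hg, add_zero]
  smul_mem' := by
    intro c f hf
    show c.1 x * f.1 x = 0
    rw [hf, mul_zero]


namespace PcAlgAux

variable {a b : ℝ}

/-- The indicator of `{x}` as an element of `pcAlg`. -/
noncomputable def indOne (a b : ℝ) (x : ↥(Set.Icc a b)) : ↥(pcAlg ↥(Set.Icc a b)) :=
  ⟨fun y => if y = x then 1 else 0, by
    refine ⟨⟨1, fun y => ?_⟩, (Set.finite_singleton x).subset fun y hy => ?_⟩
    · dsimp only; split <;> norm_num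
    · simp only [Set.mem_setOf_eq] at hy
      by_contra hyx
      apply hy
      have hne : y ≠ x := by simpa using hyx
      have hev : (fun _ : ↥(Set.Icc a b) => (0 : ℝ)) =ᶠ[nhds y]
          (fun z => if z = x then (1 : ℝ) else 0) := by
        filter_upwards [isOpen_compl_singleton.mem_nhds
          (by simpa using hne : y ∈ ({x}ᶜ : Set ↥(Set.Icc a b)))] with z hz
        simp only [Set.mem_compl_iff, Set.mem_singleton_iff] at hz
        simp [hz]
      exact continuousAt_const.congr hev⟩

lemma indOne_apply_self (x : ↥(Set.Icc a b)) : (indOne a b x).1 x = 1 := by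
  simp [indOne]

lemma evalZeroIdeal_isMaximal (a b : ℝ) (x : ↥(Set.Icc a b)) :
    (evalZeroIdeal a b x).IsMaximal := by
  have h : evalZeroIdeal a b x =
      RingHom.ker ((Pi.evalRingHom (fun _ : ↥(Set.Icc a b) => ℝ) x).comp
        (pcAlg ↥(Set.Icc a b)).val.toRingHom) := by
    ext f; rfl
  rw [h]
  exact RingHom.ker_isMaximal_of_surjective _ fun r =>
    ⟨algebraMap ℝ _ r, rfl⟩

lemma not_mem_evalZeroIdeal (x : ↥(Set.Icc a b)) :
    indOne a b x ∉ evalZeroIdeal a b x := by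
  intro h
  have : (indOne a b x).1 x = 0 := h
  rw [indOne_apply_self] at this
  norm_num at this

lemma eq_of_not_mem {m : MaximalSpectrum ↥(pcAlg ↥(Set.Icc a b))}
    {x : ↥(Set.Icc a b)} (h : indOne a b x ∉ m.asIdeal) :
    m.asIdeal = evalZeroIdeal a b x := by
  have hzero : indOne a b x * (1 - indOne a b x) = 0 := by
    apply Subtype.ext
    funext y
    show (indOne a b x).1 y * ((1 : ↥(Set.Icc a b) → ℝ) y - (indOne a b x).1 y) = 0
    simp only [indOne, Pi.one_apply]
    split <;> ring
  have hone : (1 - indOne a b x) ∈ m.asIdeal := by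
    rcases (m.isMaximal.isPrime.mem_or_mem (hzero ▸ m.asIdeal.zero_mem)) with h1 | h1
    · exact absurd h1 h
    · exact h1
  have hle : evalZeroIdeal a b x ≤ m.asIdeal := by
    intro g hg
    have hg0 : g.1 x = 0 := hg
    have hrepr : g = g * (1 - indOne a b x) := by
      apply Subtype.ext
      funext y
      show g.1 y = g.1 y * ((1 : ↥(Set.Icc a b) → ℝ) y - (indOne a b x).1 y)
      simp only [indOne, Pi.one_apply]
      split
      · rename_i hyx
        rw [hyx, hg0]; ring
      · ring
    rw [hrepr]
    exact m.asIdeal.mul_mem_left g hone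
  exact ((evalZeroIdeal_isMaximal a b x).eq_of_le m.isMaximal.ne_top hle).symm

end PcAlgAux

/-- For `R = C⁰_{b,D,<∞}(D)`, the set `T = {m_x : x ∈ D}` is open and dense
in `Specm(R)` with the Zariski topology. -/
theorem evalZeroIdeal_set_isOpen_and_dense (a b : ℝ) (hab : a < b) :
    IsOpen {I : MaximalSpectrum ↥(pcAlg ↥(Set.Icc a b)) |
        ∃ x : ↥(Set.Icc a b), I.asIdeal = evalZeroIdeal a b x} ∧
      Dense {I : MaximalSpectrum ↥(pcAlg ↥(Set.Icc a b)) |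
        ∃ x : ↥(Set.Icc a b), I.asIdeal = evalZeroIdeal a b x} := by
  
  classical
  set T := {I : MaximalSpectrum ↥(pcAlg ↥(Set.Icc a b)) |
      ∃ x : ↥(Set.Icc a b), I.asIdeal = evalZeroIdeal a b x} with hT
  have hTeq : T = MaximalSpectrum.toPrimeSpectrum ⁻¹'
      (⋃ x : ↥(Set.Icc a b), (PrimeSpectrum.basicOpen (PcAlgAux.indOne a b x) : Set _)) := by
    ext m
    simp only [hT, Set.mem_setOf_eq, Set.mem_preimage, Set.mem_iUnion, SetLike.mem_coe,
      PrimeSpectrum.mem_basicOpen]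
    constructor
    · rintro ⟨x, hx⟩
      refine ⟨x, ?_⟩
      have hid : (MaximalSpectrum.toPrimeSpectrum m).asIdeal = m.asIdeal := rfl
      rw [hid, hx]
      exact PcAlgAux.not_mem_evalZeroIdeal x
    · rintro ⟨x, hx⟩
      exact ⟨x, PcAlgAux.eq_of_not_mem hx⟩
  constructor
  · rw [hTeq]
    exact (isOpen_iUnion fun x => (PrimeSpectrum.basicOpen _).isOpen).preimage
      MaximalSpectrum.toPrimeSpectrum_continuous
  · rw [dense_iff_inter_open]
    rintro U hU ⟨m, hm⟩
    obtain ⟨V, hV, rfl⟩ := isOpen_induced_iff.mp hU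
    obtain ⟨s, hs⟩ := (PrimeSpectrum.isOpen_iff V).mp hV
    have hmV : MaximalSpectrum.toPrimeSpectrum m ∈ V := hm
    have hnot : MaximalSpectrum.toPrimeSpectrum m ∉ PrimeSpectrum.zeroLocus s := by
      rw [← hs]; simpa using hmV
    rw [PrimeSpectrum.mem_zeroLocus] at hnot
    obtain ⟨f, hfs, hfm⟩ := Set.not_subset.mp hnot
    have hf0 : f ≠ 0 := fun h => hfm (h ▸ m.asIdeal.zero_mem)
    have : ∃ x : ↥(Set.Icc a b), f.1 x ≠ 0 := by
      by_contra h
      push_neg at h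
      exact hf0 (Subtype.ext (funext h))
    obtain ⟨x, hx⟩ := this
    refine ⟨⟨evalZeroIdeal a b x, PcAlgAux.evalZeroIdeal_isMaximal a b x⟩, ?_, ⟨x, rfl⟩⟩
    show MaximalSpectrum.toPrimeSpectrum _ ∈ V
    have : MaximalSpectrum.toPrimeSpectrum
        (⟨evalZeroIdeal a b x, PcAlgAux.evalZeroIdeal_isMaximal a b x⟩ :
          MaximalSpectrum ↥(pcAlg ↥(Set.Icc a b))) ∉ PrimeSpectrum.zeroLocus s := by
      rw [PrimeSpectrum.mem_zeroLocus]
      exact fun hsub => hx (hsub hfs)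
    have hVc : V = (PrimeSpectrum.zeroLocus s)ᶜ := by
      rw [← hs, compl_compl]
    rw [hVc]
    exact this
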